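/- Generalized ties in the tied pseudo braid monoid are idempotent and pairwise commute: for every n ≥ 2 and all indices 1 ≤ i < j ≤ n and 1 ≤ k < l ≤ n, the equalities η_{i,j} η_{i,j} = η_{i,j} and η_{i,j} η_{k,l} = η_{k,l} η_{i,j} hold in the tied pseudo braid monoid TPM_n. -/

import Mathlib

/-!
The tied pseudo braid monoid `TPM n` (n ≥ 2), presented by generators
σ_1,…,σ_{n−1}, σ_1⁻¹,…,σ_{n−1}⁻¹, p_1,…,p_{n−1}, η_1,…,η_{n−1} subject to the
relations listed in the inductive `TPMRel` below.
-/

/-- Generators of the tied pseudo braid monoid: σ_i, σ_i⁻¹, p_i and η_i for 1 ≤ i ≤ n−1. -/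
inductive TPMGen (n : ℕ) : Type
  | sig (i : ℕ) (h : 1 ≤ i ∧ i ≤ n - 1) : TPMGen n
  | sigInv (i : ℕ) (h : 1 ≤ i ∧ i ≤ n - 1) : TPMGen n
  | p (i : ℕ) (h : 1 ≤ i ∧ i ≤ n - 1) : TPMGen n
  | eta (i : ℕ) (h : 1 ≤ i ∧ i ≤ n - 1) : TPMGen n

/-- The word σ_i in the free monoid on the generators. -/
def wS (n i : ℕ) : FreeMonoid (TPMGen n) :=
  if h : 1 ≤ i ∧ i ≤ n - 1 then FreeMonoid.of (TPMGen.sig i h) else 1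

/-- The word σ_i⁻¹ in the free monoid on the generators. -/
def wSI (n i : ℕ) : FreeMonoid (TPMGen n) :=
  if h : 1 ≤ i ∧ i ≤ n - 1 then FreeMonoid.of (TPMGen.sigInv i h) else 1

/-- The word p_i in the free monoid on the generators. -/
def wP (n i : ℕ) : FreeMonoid (TPMGen n) :=
  if h : 1 ≤ i ∧ i ≤ n - 1 then FreeMonoid.of (TPMGen.p i h) else 1

/-- The word η_i in the free monoid on the generators. -/
def wE (n i : ℕ) : FreeMonoid (TPMGen n) :=
  if h : 1 ≤ i ∧ i ≤ n - 1 then FreeMonoid.of (TPMGen.eta i h) else 1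

/-- The defining relations of the tied pseudo braid monoid `TPM n`. -/
inductive TPMRel (n : ℕ) : FreeMonoid (TPMGen n) → FreeMonoid (TPMGen n) → Prop
  /- σ_i σ_i⁻¹ = σ_i⁻¹ σ_i = 1 -/
  | inv_right (i : ℕ) (h : 1 ≤ i ∧ i ≤ n - 1) :
      TPMRel n (wS n i * wSI n i) 1
  | inv_left (i : ℕ) (h : 1 ≤ i ∧ i ≤ n - 1) :
      TPMRel n (wSI n i * wS n i) 1
  /- σ_i σ_{i+1} σ_i = σ_{i+1} σ_i σ_{i+1} -/
  | braid (i : ℕ) (h : 1 ≤ i ∧ i + 1 ≤ n - 1) :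
      TPMRel n (wS n i * wS n (i+1) * wS n i) (wS n (i+1) * wS n i * wS n (i+1))
  /- σ_i σ_j = σ_j σ_i for |i−j| ≥ 2 -/
  | sig_comm (i j : ℕ) (hi : 1 ≤ i ∧ i ≤ n - 1) (hj : 1 ≤ j ∧ j ≤ n - 1)
      (hij : i + 2 ≤ j ∨ j + 2 ≤ i) :
      TPMRel n (wS n i * wS n j) (wS n j * wS n i)
  /- p_i p_j = p_j p_i for |i−j| ≥ 2 -/
  | p_comm (i j : ℕ) (hi : 1 ≤ i ∧ i ≤ n - 1) (hj : 1 ≤ j ∧ j ≤ n - 1)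
      (hij : i + 2 ≤ j ∨ j + 2 ≤ i) :
      TPMRel n (wP n i * wP n j) (wP n j * wP n i)
  /- p_i σ_j^{±1} = σ_j^{±1} p_i for |i−j| ≥ 2 -/
  | p_sig_far_pos (i j : ℕ) (hi : 1 ≤ i ∧ i ≤ n - 1) (hj : 1 ≤ j ∧ j ≤ n - 1)
      (hij : i + 2 ≤ j ∨ j + 2 ≤ i) :
      TPMRel n (wP n i * wS n j) (wS n j * wP n i)
  | p_sig_far_neg (i j : ℕ) (hi : 1 ≤ i ∧ i ≤ n - 1) (hj : 1 ≤ j ∧ j ≤ n - 1)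
      (hij : i + 2 ≤ j ∨ j + 2 ≤ i) :
      TPMRel n (wP n i * wSI n j) (wSI n j * wP n i)
  /- p_i σ_i^{±1} = σ_i^{±1} p_i -/
  | p_sig_pos (i : ℕ) (h : 1 ≤ i ∧ i ≤ n - 1) :
      TPMRel n (wP n i * wS n i) (wS n i * wP n i)
  | p_sig_neg (i : ℕ) (h : 1 ≤ i ∧ i ≤ n - 1) :
      TPMRel n (wP n i * wSI n i) (wSI n i * wP n i)
  /- σ_i σ_{i+1} p_i = p_{i+1} σ_i σ_{i+1} -/
  | ssp (i : ℕ) (h : 1 ≤ i ∧ i + 1 ≤ n - 1) :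
      TPMRel n (wS n i * wS n (i+1) * wP n i) (wP n (i+1) * wS n i * wS n (i+1))
  /- σ_{i+1} σ_i p_{i+1} = p_i σ_{i+1} σ_i -/
  | ssp' (i : ℕ) (h : 1 ≤ i ∧ i + 1 ≤ n - 1) :
      TPMRel n (wS n (i+1) * wS n i * wP n (i+1)) (wP n i * wS n (i+1) * wS n i)
  /- η_i η_j = η_j η_i for all i, j -/
  | eta_comm (i j : ℕ) (hi : 1 ≤ i ∧ i ≤ n - 1) (hj : 1 ≤ j ∧ j ≤ n - 1) :
      TPMRel n (wE n i * wE n j) (wE n j * wE n i)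
  /- η_i σ_i = σ_i η_i -/
  | eta_sig (i : ℕ) (h : 1 ≤ i ∧ i ≤ n - 1) :
      TPMRel n (wE n i * wS n i) (wS n i * wE n i)
  /- η_i σ_j = σ_j η_i for |i−j| ≥ 2 -/
  | eta_sig_far (i j : ℕ) (hi : 1 ≤ i ∧ i ≤ n - 1) (hj : 1 ≤ j ∧ j ≤ n - 1)
      (hij : i + 2 ≤ j ∨ j + 2 ≤ i) :
      TPMRel n (wE n i * wS n j) (wS n j * wE n i)
  /- η_i σ_j σ_i^ε = σ_j σ_i^ε η_j for |i−j| = 1, ε = ±1 -/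
  | eta_slide_pos (i j : ℕ) (hi : 1 ≤ i ∧ i ≤ n - 1) (hj : 1 ≤ j ∧ j ≤ n - 1)
      (hij : j = i + 1 ∨ i = j + 1) :
      TPMRel n (wE n i * wS n j * wS n i) (wS n j * wS n i * wE n j)
  | eta_slide_neg (i j : ℕ) (hi : 1 ≤ i ∧ i ≤ n - 1) (hj : 1 ≤ j ∧ j ≤ n - 1)
      (hij : j = i + 1 ∨ i = j + 1) :
      TPMRel n (wE n i * wS n j * wSI n i) (wS n j * wSI n i * wE n j)
  /- η_i η_j σ_i = η_j σ_i η_j = σ_i η_i η_j for |i−j| = 1 -/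
  | eta_eta_sig₁ (i j : ℕ) (hi : 1 ≤ i ∧ i ≤ n - 1) (hj : 1 ≤ j ∧ j ≤ n - 1)
      (hij : j = i + 1 ∨ i = j + 1) :
      TPMRel n (wE n i * wE n j * wS n i) (wE n j * wS n i * wE n j)
  | eta_eta_sig₂ (i j : ℕ) (hi : 1 ≤ i ∧ i ≤ n - 1) (hj : 1 ≤ j ∧ j ≤ n - 1)
      (hij : j = i + 1 ∨ i = j + 1) :
      TPMRel n (wE n j * wS n i * wE n j) (wS n i * wE n i * wE n j)
  /- η_i² = η_i -/
  | eta_idem (i : ℕ) (h : 1 ≤ i ∧ i ≤ n - 1) :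
      TPMRel n (wE n i * wE n i) (wE n i)
  /- p_i η_i = η_i p_i -/
  | p_eta (i : ℕ) (h : 1 ≤ i ∧ i ≤ n - 1) :
      TPMRel n (wP n i * wE n i) (wE n i * wP n i)
  /- p_i η_j = η_j p_i for |i−j| ≥ 2 -/
  | p_eta_far (i j : ℕ) (hi : 1 ≤ i ∧ i ≤ n - 1) (hj : 1 ≤ j ∧ j ≤ n - 1)
      (hij : i + 2 ≤ j ∨ j + 2 ≤ i) :
      TPMRel n (wP n i * wE n j) (wE n j * wP n i)
  /- η_i p_j p_i = p_j p_i η_j for |i−j| = 1 -/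
  | eta_pp (i j : ℕ) (hi : 1 ≤ i ∧ i ≤ n - 1) (hj : 1 ≤ j ∧ j ≤ n - 1)
      (hij : j = i + 1 ∨ i = j + 1) :
      TPMRel n (wE n i * wP n j * wP n i) (wP n j * wP n i * wE n j)
  /- η_i η_j p_i = η_j p_i η_j = p_i η_i η_j for |i−j| = 1 -/
  | eta_eta_p₁ (i j : ℕ) (hi : 1 ≤ i ∧ i ≤ n - 1) (hj : 1 ≤ j ∧ j ≤ n - 1)
      (hij : j = i + 1 ∨ i = j + 1) :
      TPMRel n (wE n i * wE n j * wP n i) (wE n j * wP n i * wE n j)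
  | eta_eta_p₂ (i j : ℕ) (hi : 1 ≤ i ∧ i ≤ n - 1) (hj : 1 ≤ j ∧ j ≤ n - 1)
      (hij : j = i + 1 ∨ i = j + 1) :
      TPMRel n (wE n j * wP n i * wE n j) (wP n i * wE n i * wE n j)
  /- η_i p_j σ_i = p_j σ_i η_j for |i−j| = 1 -/
  | eta_ps (i j : ℕ) (hi : 1 ≤ i ∧ i ≤ n - 1) (hj : 1 ≤ j ∧ j ≤ n - 1)
      (hij : j = i + 1 ∨ i = j + 1) :
      TPMRel n (wE n i * wP n j * wS n i) (wP n j * wS n i * wE n j)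
  /- η_i σ_j p_i = σ_j p_i η_j for |i−j| = 1 -/
  | eta_sp (i j : ℕ) (hi : 1 ≤ i ∧ i ≤ n - 1) (hj : 1 ≤ j ∧ j ≤ n - 1)
      (hij : j = i + 1 ∨ i = j + 1) :
      TPMRel n (wE n i * wS n j * wP n i) (wS n j * wP n i * wE n j)
  /- p_i η_j = σ_i η_j σ_i⁻¹ p_i for |i−j| = 1 -/
  | p_eta_conj (i j : ℕ) (hi : 1 ≤ i ∧ i ≤ n - 1) (hj : 1 ≤ j ∧ j ≤ n - 1)
      (hij : j = i + 1 ∨ i = j + 1) :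
      TPMRel n (wP n i * wE n j) (wS n i * wE n j * wSI n i * wP n i)

/-- The tied pseudo braid monoid `TPM n`: the quotient of the free monoid on the
generators by the congruence generated by the defining relations. -/
def TPM (n : ℕ) := (conGen (TPMRel n)).Quotient

instance (n : ℕ) : Monoid (TPM n) :=
  inferInstanceAs (Monoid ((conGen (TPMRel n)).Quotient))

/-- The generator σ_i of `TPM n` (defined for 1 ≤ i ≤ n−1; junk value 1 otherwise). -/
def TPM.s (n i : ℕ) : TPM n := (conGen (TPMRel n)).mk' (wS n i)

/-- The generator σ_i⁻¹ of `TPM n` (defined for 1 ≤ i ≤ n−1; junk value 1 otherwise). -/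
def TPM.sInv (n i : ℕ) : TPM n := (conGen (TPMRel n)).mk' (wSI n i)

/-- The generator p_i of `TPM n` (defined for 1 ≤ i ≤ n−1; junk value 1 otherwise). -/
def TPM.p (n i : ℕ) : TPM n := (conGen (TPMRel n)).mk' (wP n i)

/-- The generator η_i of `TPM n` (defined for 1 ≤ i ≤ n−1; junk value 1 otherwise). -/
def TPM.e (n i : ℕ) : TPM n := (conGen (TPMRel n)).mk' (wE n i)

/-- The generalized tie η_{i,j} = σ_i σ_{i+1} ⋯ σ_{j−2} η_{j−1} σ_{j−2}⁻¹ ⋯ σ_{i+1}⁻¹ σ_i⁻¹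
in `TPM n`, for 1 ≤ i < j ≤ n (in particular η_{i,i+1} = η_i). -/
def TPM.genTie (n i j : ℕ) : TPM n :=
  (((List.range' i (j - 1 - i)).map (TPM.s n)).prod) * TPM.e n (j - 1) *
    (((List.range' i (j - 1 - i)).reverse.map (TPM.sInv n)).prod)

section TPMAux

variable (n : ℕ)

private lemma tpm_rel {w w' : FreeMonoid (TPMGen n)} (h : TPMRel n w w') :
    (conGen (TPMRel n)).mk' w = (conGen (TPMRel n)).mk' w' :=
  (Con.eq _).2 (ConGen.Rel.of _ _ h)

private lemma s_inval {i : ℕ} (h : ¬(1 ≤ i ∧ i ≤ n - 1)) : TPM.s n i = 1 := by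
  simp [TPM.s, wS, h]
  rfl

private lemma sInv_inval {i : ℕ} (h : ¬(1 ≤ i ∧ i ≤ n - 1)) : TPM.sInv n i = 1 := by
  simp [TPM.sInv, wSI, h]
  rfl

private lemma e_inval {i : ℕ} (h : ¬(1 ≤ i ∧ i ≤ n - 1)) : TPM.e n i = 1 := by
  simp [TPM.e, wE, h]
  rfl

/-- σ_i σ_i⁻¹ = 1, totally. -/
private lemma s_mul_sInv (i : ℕ) : TPM.s n i * TPM.sInv n i = 1 := by
  by_cases h : 1 ≤ i ∧ i ≤ n - 1
  · have hr := tpm_rel n (TPMRel.inv_right i h)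
    simp [TPM.s, TPM.sInv, ← map_mul] at hr ⊢
    exact hr
  · simp [s_inval n h, sInv_inval n h]

private lemma sInv_mul_s (i : ℕ) : TPM.sInv n i * TPM.s n i = 1 := by
  by_cases h : 1 ≤ i ∧ i ≤ n - 1
  · have hr := tpm_rel n (TPMRel.inv_left i h)
    simp [TPM.s, TPM.sInv, ← map_mul] at hr ⊢
    exact hr
  · simp [s_inval n h, sInv_inval n h]

private lemma s_sInv_cancel (i : ℕ) (x : TPM n) : TPM.s n i * (TPM.sInv n i * x) = x := by
  rw [← mul_assoc, s_mul_sInv, one_mul]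

private lemma sInv_s_cancel (i : ℕ) (x : TPM n) : TPM.sInv n i * (TPM.s n i * x) = x := by
  rw [← mul_assoc, sInv_mul_s, one_mul]

private lemma cancel_s_left {i : ℕ} {x y : TPM n}
    (h : TPM.s n i * x = TPM.s n i * y) : x = y := by
  have h2 := congrArg (fun z => TPM.sInv n i * z) h
  simpa only [sInv_s_cancel] using h2

private lemma cancel_sInv_left {i : ℕ} {x y : TPM n}
    (h : TPM.sInv n i * x = TPM.sInv n i * y) : x = y := by
  have h2 := congrArg (fun z => TPM.s n i * z) h
  simpa only [s_sInv_cancel] using h2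

private lemma cancel_s_right {i : ℕ} {x y : TPM n}
    (h : x * TPM.s n i = y * TPM.s n i) : x = y := by
  have h2 := congrArg (fun z => z * TPM.sInv n i) h
  simpa only [mul_assoc, s_mul_sInv, mul_one] using h2

private lemma cancel_sInv_right {i : ℕ} {x y : TPM n}
    (h : x * TPM.sInv n i = y * TPM.sInv n i) : x = y := by
  have h2 := congrArg (fun z => z * TPM.s n i) h
  simpa only [mul_assoc, sInv_mul_s, mul_one] using h2

/-- If `a*b = b*a = 1` and `a` commutes with `y`, then `b` commutes with `y`. -/
private lemma comm_of_inv {a b y : TPM n} (hab : a * b = 1) (hba : b * a = 1)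
    (h : a * y = y * a) : b * y = y * b := by
  calc b * y = b * y * (a * b) := by rw [hab, mul_one]
    _ = b * (y * a) * b := by simp only [mul_assoc]
    _ = b * (a * y) * b := by rw [h]
    _ = (b * a) * (y * b) := by simp only [mul_assoc]
    _ = y * b := by rw [hba, one_mul]

private lemma comm_sInv {i : ℕ} {y : TPM n}
    (h : TPM.s n i * y = y * TPM.s n i) : TPM.sInv n i * y = y * TPM.sInv n i :=
  comm_of_inv n (s_mul_sInv n i) (sInv_mul_s n i) h

/-- The braid relation. -/
private lemma braid {i : ℕ} (h : 1 ≤ i ∧ i + 1 ≤ n - 1) :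
    TPM.s n i * TPM.s n (i+1) * TPM.s n i = TPM.s n (i+1) * TPM.s n i * TPM.s n (i+1) := by
  have hr := tpm_rel n (TPMRel.braid i h)
  simp [TPM.s, ← map_mul] at hr ⊢
  exact hr

/-- Far commutation of σ's, total. -/
private lemma s_comm {i j : ℕ} (hij : i + 2 ≤ j ∨ j + 2 ≤ i) :
    TPM.s n i * TPM.s n j = TPM.s n j * TPM.s n i := by
  by_cases hi : 1 ≤ i ∧ i ≤ n - 1
  · by_cases hj : 1 ≤ j ∧ j ≤ n - 1
    · have hr := tpm_rel n (TPMRel.sig_comm i j hi hj hij)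
      simp [TPM.s, ← map_mul] at hr ⊢
      exact hr
    · simp [s_inval n hj]
  · simp [s_inval n hi]

/-- η_i commutes with η_j, total. -/
private lemma e_comm (i j : ℕ) : TPM.e n i * TPM.e n j = TPM.e n j * TPM.e n i := by
  by_cases hi : 1 ≤ i ∧ i ≤ n - 1
  · by_cases hj : 1 ≤ j ∧ j ≤ n - 1
    · have hr := tpm_rel n (TPMRel.eta_comm i j hi hj)
      simp [TPM.e, ← map_mul] at hr ⊢
      exact hr
    · simp [e_inval n hj]
  · simp [e_inval n hi]

/-- η_i² = η_i, total. -/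
private lemma e_idem (i : ℕ) : TPM.e n i * TPM.e n i = TPM.e n i := by
  by_cases hi : 1 ≤ i ∧ i ≤ n - 1
  · have hr := tpm_rel n (TPMRel.eta_idem i hi)
    simp [TPM.e, ← map_mul] at hr ⊢
    exact hr
  · simp [e_inval n hi]

/-- η_i σ_i = σ_i η_i, total. -/
private lemma e_s_same (i : ℕ) : TPM.e n i * TPM.s n i = TPM.s n i * TPM.e n i := by
  by_cases hi : 1 ≤ i ∧ i ≤ n - 1
  · have hr := tpm_rel n (TPMRel.eta_sig i hi)
    simp [TPM.e, TPM.s, ← map_mul] at hr ⊢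
    exact hr
  · simp [e_inval n hi, s_inval n hi]

/-- η_i σ_j = σ_j η_i for |i-j| ≥ 2, total. -/
private lemma e_s_far {i j : ℕ} (hij : i + 2 ≤ j ∨ j + 2 ≤ i) :
    TPM.e n i * TPM.s n j = TPM.s n j * TPM.e n i := by
  by_cases hi : 1 ≤ i ∧ i ≤ n - 1
  · by_cases hj : 1 ≤ j ∧ j ≤ n - 1
    · have hr := tpm_rel n (TPMRel.eta_sig_far i j hi hj hij)
      simp [TPM.e, TPM.s, ← map_mul] at hr ⊢
      exact hr
    · simp [s_inval n hj]
  · simp [e_inval n hi]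

end TPMAux
section TPMAux2

variable (n : ℕ)

/-- (A): η_i σ_{i+1} σ_i = σ_{i+1} σ_i η_{i+1}. -/
private lemma relA {i : ℕ} (h : 1 ≤ i ∧ i + 1 ≤ n - 1) :
    TPM.e n i * TPM.s n (i+1) * TPM.s n i = TPM.s n (i+1) * TPM.s n i * TPM.e n (i+1) := by
  have hr := tpm_rel n (TPMRel.eta_slide_pos i (i+1) ⟨h.1, by omega⟩ ⟨by omega, h.2⟩ (Or.inl rfl))
  simp [TPM.e, TPM.s, ← map_mul] at hr ⊢
  exact hr

/-- (B): η_i σ_{i+1} σ_i⁻¹ = σ_{i+1} σ_i⁻¹ η_{i+1}. -/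
private lemma relB {i : ℕ} (h : 1 ≤ i ∧ i + 1 ≤ n - 1) :
    TPM.e n i * TPM.s n (i+1) * TPM.sInv n i = TPM.s n (i+1) * TPM.sInv n i * TPM.e n (i+1) := by
  have hr := tpm_rel n (TPMRel.eta_slide_neg i (i+1) ⟨h.1, by omega⟩ ⟨by omega, h.2⟩ (Or.inl rfl))
  simp [TPM.e, TPM.s, TPM.sInv, ← map_mul] at hr ⊢
  exact hr

/-- (C): η_{i+1} σ_i σ_{i+1} = σ_i σ_{i+1} η_i. -/
private lemma relC {i : ℕ} (h : 1 ≤ i ∧ i + 1 ≤ n - 1) :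
    TPM.e n (i+1) * TPM.s n i * TPM.s n (i+1) = TPM.s n i * TPM.s n (i+1) * TPM.e n i := by
  have hr := tpm_rel n (TPMRel.eta_slide_pos (i+1) i ⟨by omega, h.2⟩ ⟨h.1, by omega⟩ (Or.inr rfl))
  simp [TPM.e, TPM.s, ← map_mul] at hr ⊢
  exact hr

/-- F1: σ_i η_{i+1} σ_i⁻¹ = σ_{i+1}⁻¹ η_i σ_{i+1}. -/
private lemma F1 {i : ℕ} (h : 1 ≤ i ∧ i + 1 ≤ n - 1) :
    TPM.s n i * TPM.e n (i+1) * TPM.sInv n i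
      = TPM.sInv n (i+1) * TPM.e n i * TPM.s n (i+1) := by
  have h1 := congrArg (· * TPM.sInv n i) (relA n h)
  simp only [mul_assoc, s_mul_sInv, mul_one] at h1
  -- h1 : e i * s (i+1) = s (i+1) * (s i * (e (i+1) * sInv i))
  have h2 := congrArg (TPM.sInv n (i+1) * ·) h1
  simp only [sInv_s_cancel] at h2
  simpa only [← mul_assoc] using h2.symm

/-- F2: σ_i η_{i+1} σ_i⁻¹ = σ_i⁻¹ η_{i+1} σ_i. -/
private lemma F2 {i : ℕ} (h : 1 ≤ i ∧ i + 1 ≤ n - 1) :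
    TPM.s n i * TPM.e n (i+1) * TPM.sInv n i
      = TPM.sInv n i * TPM.e n (i+1) * TPM.s n i := by
  have h1 := congrArg (· * TPM.s n i) (relB n h)
  simp only [mul_assoc, sInv_mul_s, mul_one] at h1
  -- h1 : e i * s (i+1) = s (i+1) * (sInv i * (e (i+1) * s i))
  have h2 := congrArg (TPM.sInv n (i+1) * ·) h1
  simp only [sInv_s_cancel] at h2
  have h3 : TPM.sInv n (i+1) * TPM.e n i * TPM.s n (i+1)
      = TPM.sInv n i * TPM.e n (i+1) * TPM.s n i := by
    simpa only [← mul_assoc] using h2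
  exact (F1 n h).trans h3

/-- F3: σ_i η_{i+1} σ_i⁻¹ = σ_{i+1} η_i σ_{i+1}⁻¹. -/
private lemma F3 {i : ℕ} (h : 1 ≤ i ∧ i + 1 ≤ n - 1) :
    TPM.s n i * TPM.e n (i+1) * TPM.sInv n i
      = TPM.s n (i+1) * TPM.e n i * TPM.sInv n (i+1) := by
  have h1 := congrArg (· * TPM.sInv n (i+1)) (relC n h)
  simp only [mul_assoc, s_mul_sInv, mul_one] at h1
  -- h1 : e (i+1) * s i = s i * (s (i+1) * (e i * sInv (i+1)))
  have h2 := congrArg (TPM.sInv n i * ·) h1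
  simp only [sInv_s_cancel] at h2
  have h3 : TPM.sInv n i * TPM.e n (i+1) * TPM.s n i
      = TPM.s n (i+1) * TPM.e n i * TPM.sInv n (i+1) := by
    simpa only [← mul_assoc] using h2
  exact (F2 n h).trans h3

/-- F4: σ_{i+1} η_i σ_{i+1}⁻¹ = σ_{i+1}⁻¹ η_i σ_{i+1}. -/
private lemma F4 {i : ℕ} (h : 1 ≤ i ∧ i + 1 ≤ n - 1) :
    TPM.s n (i+1) * TPM.e n i * TPM.sInv n (i+1)
      = TPM.sInv n (i+1) * TPM.e n i * TPM.s n (i+1) :=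
  (F3 n h).symm.trans (F1 n h)

/-- σ_i² commutes with η_{i+1}. -/
private lemma Fsq1 {i : ℕ} (h : 1 ≤ i ∧ i + 1 ≤ n - 1) :
    TPM.s n i * TPM.s n i * TPM.e n (i+1) = TPM.e n (i+1) * TPM.s n i * TPM.s n i := by
  have h1 := congrArg (fun z => TPM.s n i * z * TPM.s n i) (F2 n h)
  simp only [mul_assoc, sInv_mul_s, s_sInv_cancel, mul_one] at h1
  simpa only [← mul_assoc] using h1

/-- σ_{i+1}² commutes with η_i. -/
private lemma Fsq2 {i : ℕ} (h : 1 ≤ i ∧ i + 1 ≤ n - 1) :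
    TPM.s n (i+1) * TPM.s n (i+1) * TPM.e n i = TPM.e n i * TPM.s n (i+1) * TPM.s n (i+1) := by
  have h1 := congrArg (fun z => TPM.s n (i+1) * z * TPM.s n (i+1)) (F4 n h)
  simp only [mul_assoc, sInv_mul_s, s_sInv_cancel, mul_one] at h1
  simpa only [← mul_assoc] using h1

/-- σ_{i+1}⁻² commutes with η_i. -/
private lemma FsqInv2 {i : ℕ} (h : 1 ≤ i ∧ i + 1 ≤ n - 1) :
    TPM.sInv n (i+1) * TPM.sInv n (i+1) * TPM.e n i
      = TPM.e n i * TPM.sInv n (i+1) * TPM.sInv n (i+1) := by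
  have hab : (TPM.s n (i+1) * TPM.s n (i+1)) * (TPM.sInv n (i+1) * TPM.sInv n (i+1)) = 1 := by
    simp only [mul_assoc, s_sInv_cancel, s_mul_sInv]
  have hba : (TPM.sInv n (i+1) * TPM.sInv n (i+1)) * (TPM.s n (i+1) * TPM.s n (i+1)) = 1 := by
    simp only [mul_assoc, sInv_s_cancel, sInv_mul_s]
  have h1 : (TPM.s n (i+1) * TPM.s n (i+1)) * TPM.e n i
      = TPM.e n i * (TPM.s n (i+1) * TPM.s n (i+1)) := by
    simpa only [mul_assoc] using Fsq2 n h
  have h2 := comm_of_inv n hab hba h1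
  simpa only [← mul_assoc] using h2

/-- Mixed braid: σ_a σ_{a+1}⁻¹ σ_a⁻¹ = σ_{a+1}⁻¹ σ_a⁻¹ σ_{a+1}. -/
private lemma bmix {a : ℕ} (h : 1 ≤ a ∧ a + 1 ≤ n - 1) :
    TPM.s n a * TPM.sInv n (a+1) * TPM.sInv n a
      = TPM.sInv n (a+1) * TPM.sInv n a * TPM.s n (a+1) := by
  have h1 := congrArg (· * TPM.sInv n (a+1)) (braid n h)
  simp only [mul_assoc, s_mul_sInv, mul_one] at h1
  -- h1 : s a * (s (a+1) * (s a * sInv (a+1))) = s (a+1) * s a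
  have h2 := congrArg (TPM.sInv n a * ·) h1
  simp only [sInv_s_cancel] at h2
  -- h2 : s (a+1) * (s a * sInv (a+1)) = sInv a * (s (a+1) * s a)
  have h3 := congrArg (fun z => TPM.sInv n (a+1) * z * TPM.sInv n a) h2
  simp only [mul_assoc, sInv_s_cancel, s_mul_sInv, s_sInv_cancel, mul_one] at h3
  simpa only [← mul_assoc] using h3

end TPMAux2
section TPMAux3

variable (n : ℕ)

private lemma shift_assoc {x y y' : TPM n} (h : x * y = y' * x) (z : TPM n) :
    x * (y * z) = y' * (x * z) := by rw [← mul_assoc, h, mul_assoc]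

/-- The transposition (k, k+1) acting on indices. -/
private def tau (k x : ℕ) : ℕ := if x = k then k + 1 else if x = k + 1 then k else x

private lemma tau_tau (k x : ℕ) : tau k (tau k x) = x := by
  simp only [tau]; split_ifs <;> omega

private lemma genTie_base (a : ℕ) : TPM.genTie n a (a+1) = TPM.e n a := by
  simp [TPM.genTie]

private lemma genTie_succ {a b : ℕ} (h : a + 1 < b) :
    TPM.genTie n a b = TPM.s n a * TPM.genTie n (a+1) b * TPM.sInv n a := by
  have hnum : b - 1 - a = (b - 1 - (a+1)) + 1 := by omega
  rw [TPM.genTie, TPM.genTie, hnum, List.range'_succ]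
  simp [mul_assoc]

private lemma genTie_two (a : ℕ) :
    TPM.genTie n a (a+2) = TPM.s n a * TPM.e n (a+1) * TPM.sInv n a := by
  have e2 : a + 1 + 1 = a + 2 := rfl
  rw [genTie_succ n (show a + 1 < a + 2 by omega), ← e2, genTie_base]

/-- Unordered generalized tie. -/
private def tie (a b : ℕ) : TPM n := TPM.genTie n (min a b) (max a b)

private lemma tie_lt {a b : ℕ} (h : a < b) : tie n a b = TPM.genTie n a b := by
  simp [tie, min_eq_left h.le, max_eq_right h.le]

private lemma tie_comm (a b : ℕ) : tie n a b = tie n b a := by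
  simp [tie, min_comm, max_comm]

private lemma tie_adj (m : ℕ) : tie n m (m+1) = TPM.e n m := by
  rw [tie_lt n (by omega), genTie_base]

/-- Ca1: (σ_a η_{a+1} σ_a⁻¹) σ_{a+1} = σ_{a+1} η_a. -/
private lemma Ca1 {a : ℕ} (h : 1 ≤ a ∧ a + 1 ≤ n - 1) :
    (TPM.s n a * TPM.e n (a+1) * TPM.sInv n a) * TPM.s n (a+1)
      = TPM.s n (a+1) * TPM.e n a := by
  have h1 := congrArg (· * TPM.s n (a+1)) (F3 n h)
  simp only [mul_assoc, sInv_mul_s, mul_one] at h1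
  simpa only [← mul_assoc] using h1

/-- Ca2: σ_a (σ_a η_{a+1} σ_a⁻¹) = η_{a+1} σ_a. -/
private lemma Ca2 {a : ℕ} (h : 1 ≤ a ∧ a + 1 ≤ n - 1) :
    TPM.s n a * (TPM.s n a * TPM.e n (a+1) * TPM.sInv n a)
      = TPM.e n (a+1) * TPM.s n a := by
  have h1 := congrArg (TPM.s n a * ·) (F2 n h)
  simp only [mul_assoc, s_sInv_cancel] at h1
  simpa only [← mul_assoc] using h1

/-- Ca3: σ_{a+1} (σ_a η_{a+1} σ_a⁻¹) = η_a σ_{a+1}. -/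
private lemma Ca3 {a : ℕ} (h : 1 ≤ a ∧ a + 1 ≤ n - 1) :
    TPM.s n (a+1) * (TPM.s n a * TPM.e n (a+1) * TPM.sInv n a)
      = TPM.e n a * TPM.s n (a+1) := by
  have h1 := congrArg (TPM.s n (a+1) * ·) (F1 n h)
  simp only [mul_assoc, s_sInv_cancel] at h1
  simpa only [← mul_assoc] using h1

/-- Main conjugation lemma: σ_k η_{a,b} = η_{τ_k a, τ_k b} σ_k. -/
private lemma L1core : ∀ g k a b, b - a = g → 1 ≤ k → k ≤ n - 1 → 1 ≤ a → a < b → b ≤ n →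
    TPM.s n k * TPM.genTie n a b = tie n (tau k a) (tau k b) * TPM.s n k := by
  intro g
  induction g using Nat.strong_induction_on with
  | _ g IH =>
  intro k a b hg hk1 hk2 ha hab hb
  by_cases hbase : b = a + 1
  · -- base case: η_a
    subst hbase
    by_cases hka : k = a
    · subst hka
      have t1 : tau k k = k + 1 := by simp [tau]
      have t2 : tau k (k+1) = k := by simp [tau]
      rw [genTie_base, t1, t2, tie_comm, tie_adj]
      exact (e_s_same n k).symm
    · by_cases hka1 : k = a + 1
      · subst hka1
        have t1 : tau (a+1) a = a := by simp only [tau]; split_ifs <;> omega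
        have t2 : tau (a+1) (a+1) = a + 2 := by simp [tau]
        rw [genTie_base, t1, t2, tie_lt n (by omega), genTie_two]
        exact (Ca1 n ⟨ha, hk2⟩).symm
      · by_cases hka2 : k + 1 = a
        · subst hka2
          have t1 : tau k (k+1) = k := by simp [tau]
          have t2 : tau k (k+1+1) = k + 1 + 1 := by simp only [tau]; split_ifs <;> omega
          rw [genTie_base, t1, t2, tie_lt n (by omega)]
          have e2 : k + 1 + 1 = k + 2 := rfl
          rw [e2, genTie_two]
          simp only [mul_assoc, sInv_mul_s, mul_one]
        · -- far
          have hfar : a + 2 ≤ k ∨ k + 2 ≤ a := by omega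
          have t1 : tau k a = a := by simp only [tau]; split_ifs <;> omega
          have t2 : tau k (a+1) = a + 1 := by simp only [tau]; split_ifs <;> omega
          rw [genTie_base, t1, t2, tie_adj]
          exact (e_s_far n hfar).symm
  · -- step case : b ≥ a + 2
    have hab2 : a + 2 ≤ b := by omega
    by_cases hka2 : k + 1 = a
    · -- k = a - 1
      subst hka2
      have t1 : tau k (k+1) = k := by simp [tau]
      have t2 : tau k b = b := by simp only [tau]; split_ifs <;> omega
      rw [t1, t2, tie_lt n (by omega), genTie_succ n (show k + 1 < b by omega)]
      simp only [mul_assoc, sInv_mul_s, mul_one]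
    · by_cases hka : k = a
      · -- k = a
        subst hka
        have t1 : tau k k = k + 1 := by simp [tau]
        have t2 : tau k b = b := by simp only [tau]; split_ifs <;> omega
        rw [t1, t2, tie_lt n (by omega)]
        by_cases hb3 : b = k + 2
        · subst hb3
          have e2 : k + 1 + 1 = k + 2 := rfl
          rw [genTie_two, ← e2, genTie_base]
          exact Ca2 n ⟨ha, by omega⟩
        · -- b ≥ k + 3
          have hb4 : k + 3 ≤ b := by omega
          -- top recursion for (k, b) and (k+1, b)
          have htopIH := IH (b - 1 - k) (by omega) (b-1) k (b-1) rfl (by omega) (by omega) ha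
            (by omega) (by omega)
          have u1 : tau (b-1) k = k := by simp only [tau]; split_ifs <;> omega
          have u2 : tau (b-1) (b-1) = b := by simp only [tau]; split_ifs <;> omega
          rw [u1, u2, tie_lt n (by omega)] at htopIH
          have htop : TPM.genTie n k b
              = TPM.s n (b-1) * TPM.genTie n k (b-1) * TPM.sInv n (b-1) := by
            have h2 := congrArg (· * TPM.sInv n (b-1)) htopIH
            simp only [mul_assoc, s_mul_sInv, mul_one] at h2
            simp only [← mul_assoc] at h2
            exact h2.symm
          have htopIH' := IH (b - 1 - (k+1)) (by omega) (b-1) (k+1) (b-1) rfl (by omega)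
            (by omega) (by omega) (by omega) (by omega)
          have u3 : tau (b-1) (k+1) = k + 1 := by simp only [tau]; split_ifs <;> omega
          rw [u3, u2, tie_lt n (by omega)] at htopIH'
          have htop' : TPM.genTie n (k+1) b
              = TPM.s n (b-1) * TPM.genTie n (k+1) (b-1) * TPM.sInv n (b-1) := by
            have h2 := congrArg (· * TPM.sInv n (b-1)) htopIH'
            simp only [mul_assoc, s_mul_sInv, mul_one] at h2
            simp only [← mul_assoc] at h2
            exact h2.symm
          have hmid := IH (b - 1 - k) (by omega) k k (b-1) rfl hk1 hk2 ha (by omega) (by omega)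
          have u4 : tau k (b-1) = b - 1 := by simp only [tau]; split_ifs <;> omega
          rw [t1, u4, tie_lt n (by omega)] at hmid
          have hfar : TPM.s n k * TPM.s n (b-1) = TPM.s n (b-1) * TPM.s n k :=
            s_comm n (Or.inl (by omega))
          have hfarInv : TPM.s n k * TPM.sInv n (b-1) = TPM.sInv n (b-1) * TPM.s n k :=
            (comm_sInv n hfar.symm).symm
          calc TPM.s n k * TPM.genTie n k b
              = TPM.s n k * (TPM.s n (b-1) * (TPM.genTie n k (b-1) * TPM.sInv n (b-1))) := by
                rw [htop]; simp only [mul_assoc]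
            _ = TPM.s n (b-1) * (TPM.s n k * (TPM.genTie n k (b-1) * TPM.sInv n (b-1))) := by
                rw [shift_assoc n hfar]
            _ = TPM.s n (b-1) * (TPM.genTie n (k+1) (b-1) * (TPM.s n k * TPM.sInv n (b-1))) := by
                rw [shift_assoc n hmid]
            _ = TPM.s n (b-1) * (TPM.genTie n (k+1) (b-1) * (TPM.sInv n (b-1) * TPM.s n k)) := by
                rw [hfarInv]
            _ = TPM.genTie n (k+1) b * TPM.s n k := by
                rw [htop']; simp only [mul_assoc]
      · by_cases hka1 : k = a + 1
        · -- k = a + 1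
          subst hka1
          have t1 : tau (a+1) a = a := by simp only [tau]; split_ifs <;> omega
          by_cases hb3 : b = a + 2
          · subst hb3
            have t2 : tau (a+1) (a+2) = a + 1 := by simp only [tau]; split_ifs <;> omega
            rw [t1, t2, tie_lt n (by omega), genTie_two, genTie_base]
            exact Ca3 n ⟨ha, hk2⟩
          · -- b ≥ a + 3
            have hb4 : a + 3 ≤ b := by omega
            have t2 : tau (a+1) b = b := by simp only [tau]; split_ifs <;> omega
            rw [t1, t2, tie_lt n hab]
            have e2 : a + 1 + 1 = a + 2 := rfl
            have hfull : TPM.genTie n a b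
                = TPM.s n a * (TPM.s n (a+1) * (TPM.genTie n (a+2) b
                    * (TPM.sInv n (a+1) * TPM.sInv n a))) := by
              rw [genTie_succ n (show a + 1 < b by omega),
                genTie_succ n (show a + 1 + 1 < b by omega), e2]
              simp only [mul_assoc]
            have hIH2 := IH (b - (a+2)) (by omega) a (a+2) b rfl ha (by omega) (by omega)
              (by omega) hb
            have u1 : tau a (a+2) = a + 2 := by simp only [tau]; split_ifs <;> omega
            have u2 : tau a b = b := by simp only [tau]; split_ifs <;> omega
            rw [u1, u2, tie_lt n (by omega)] at hIH2
            have hbr : TPM.s n (a+1) * (TPM.s n a * TPM.s n (a+1))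
                = TPM.s n a * (TPM.s n (a+1) * TPM.s n a) := by
              have := braid n ⟨ha, hk2⟩
              simp only [mul_assoc] at this
              exact this.symm
            have hbm : TPM.s n a * (TPM.sInv n (a+1) * TPM.sInv n a)
                = TPM.sInv n (a+1) * (TPM.sInv n a * TPM.s n (a+1)) := by
              have := bmix n ⟨ha, hk2⟩
              simp only [mul_assoc] at this
              exact this
            calc TPM.s n (a+1) * TPM.genTie n a b
                = TPM.s n (a+1) * (TPM.s n a * TPM.s n (a+1))
                    * (TPM.genTie n (a+2) b * (TPM.sInv n (a+1) * TPM.sInv n a)) := by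
                  rw [hfull]; simp only [mul_assoc]
              _ = TPM.s n a * (TPM.s n (a+1) * TPM.s n a)
                    * (TPM.genTie n (a+2) b * (TPM.sInv n (a+1) * TPM.sInv n a)) := by
                  rw [hbr]
              _ = TPM.s n a * (TPM.s n (a+1) * (TPM.s n a * TPM.genTie n (a+2) b
                    * (TPM.sInv n (a+1) * TPM.sInv n a))) := by
                  simp only [mul_assoc]
              _ = TPM.s n a * (TPM.s n (a+1) * (TPM.genTie n (a+2) b * (TPM.s n a
                    * (TPM.sInv n (a+1) * TPM.sInv n a)))) := by
                  rw [hIH2]; simp only [mul_assoc]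
              _ = TPM.s n a * (TPM.s n (a+1) * (TPM.genTie n (a+2) b * (TPM.sInv n (a+1)
                    * (TPM.sInv n a * TPM.s n (a+1))))) := by
                  rw [hbm]
              _ = TPM.genTie n a b * TPM.s n (a+1) := by
                  rw [hfull]; simp only [mul_assoc]
        · -- far case: k + 2 ≤ a or a + 2 ≤ k
          have hfarc : k + 2 ≤ a ∨ a + 2 ≤ k := by omega
          have t1 : tau k a = a := by simp only [tau]; split_ifs <;> omega
          have htb : a + 2 ≤ tau k b ∧ tau k b ≤ n := by
            constructor
            · simp only [tau]; split_ifs <;> omega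
            · simp only [tau]; split_ifs <;> omega
          have hIHstep := IH (b - (a+1)) (by omega) k (a+1) b rfl hk1 hk2 (by omega)
            (by omega) hb
          have u1 : tau k (a+1) = a + 1 := by simp only [tau]; split_ifs <;> omega
          rw [u1, tie_lt n (show a + 1 < tau k b by omega)] at hIHstep
          have hsa : TPM.s n k * TPM.s n a = TPM.s n a * TPM.s n k := s_comm n hfarc
          have hsainv : TPM.s n k * TPM.sInv n a = TPM.sInv n a * TPM.s n k :=
            (comm_sInv n hsa.symm).symm
          rw [t1, tie_lt n (show a < tau k b by omega)]
          calc TPM.s n k * TPM.genTie n a b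
              = TPM.s n k * (TPM.s n a * (TPM.genTie n (a+1) b * TPM.sInv n a)) := by
                rw [genTie_succ n (show a + 1 < b by omega)]; simp only [mul_assoc]
            _ = TPM.s n a * (TPM.s n k * (TPM.genTie n (a+1) b * TPM.sInv n a)) := by
                rw [shift_assoc n hsa]
            _ = TPM.s n a * (TPM.genTie n (a+1) (tau k b) * (TPM.s n k * TPM.sInv n a)) := by
                rw [shift_assoc n hIHstep]
            _ = TPM.s n a * (TPM.genTie n (a+1) (tau k b) * (TPM.sInv n a * TPM.s n k)) := by
                rw [hsainv]
            _ = TPM.genTie n a (tau k b) * TPM.s n k := by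
                rw [genTie_succ n (show a + 1 < tau k b by omega)]; simp only [mul_assoc]

end TPMAux3
section TPMAux4

variable (n : ℕ)

private lemma shift_assoc' {x y x' : TPM n} (h : x * y = y * x') (z : TPM n) :
    x * (y * z) = y * (x' * z) := by rw [← mul_assoc, h, mul_assoc]

private lemma tau_ge_one {k x : ℕ} (hk : 1 ≤ k) (hx : 1 ≤ x) : 1 ≤ tau k x := by
  simp only [tau]; split_ifs <;> omega

private lemma tau_le_n {k x : ℕ} (hk1 : 1 ≤ k) (hk2 : k ≤ n - 1) (hx : x ≤ n) : tau k x ≤ n := by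
  simp only [tau]; split_ifs <;> omega

private lemma tau_ne {k x y : ℕ} (h : x ≠ y) : tau k x ≠ tau k y := fun he =>
  h (by rw [← tau_tau k x, he, tau_tau])

/-- σ_k (unordered tie) version of the conjugation lemma. -/
private lemma L1T {k a b : ℕ} (hk1 : 1 ≤ k) (hk2 : k ≤ n - 1) (ha1 : 1 ≤ a) (hb1 : 1 ≤ b)
    (han : a ≤ n) (hbn : b ≤ n) (hab : a ≠ b) :
    TPM.s n k * tie n a b = tie n (tau k a) (tau k b) * TPM.s n k := by
  rcases lt_or_gt_of_ne hab with h | h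
  · rw [tie_lt n h]
    exact L1core n (b - a) k a b rfl hk1 hk2 ha1 h hbn
  · rw [tie_comm n a b, tie_comm n (tau k a) (tau k b), tie_lt n h]
    exact L1core n (a - b) k b a rfl hk1 hk2 hb1 h han

/-- σ_k⁻¹ version of the conjugation lemma. -/
private lemma L1invT {k a b : ℕ} (hk1 : 1 ≤ k) (hk2 : k ≤ n - 1) (ha1 : 1 ≤ a) (hb1 : 1 ≤ b)
    (han : a ≤ n) (hbn : b ≤ n) (hab : a ≠ b) :
    TPM.sInv n k * tie n a b = tie n (tau k a) (tau k b) * TPM.sInv n k := by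
  have h0 := L1T n hk1 hk2 (tau_ge_one hk1 ha1) (tau_ge_one hk1 hb1)
    (tau_le_n n hk1 hk2 han) (tau_le_n n hk1 hk2 hbn) (tau_ne hab)
  rw [tau_tau, tau_tau] at h0
  have h1 := congrArg (fun z => TPM.sInv n k * z * TPM.sInv n k) h0
  simp only [mul_assoc, sInv_s_cancel, s_mul_sInv, mul_one] at h1
  exact h1.symm

/-- Top recursion: η_{a,b} = σ_{b-1} η_{a,b-1} σ_{b-1}⁻¹. -/
private lemma genTie_top {a b : ℕ} (ha : 1 ≤ a) (h : a + 1 < b) (hb : b ≤ n) :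
    TPM.genTie n a b = TPM.s n (b-1) * TPM.genTie n a (b-1) * TPM.sInv n (b-1) := by
  have h0 := L1core n (b - 1 - a) (b-1) a (b-1) rfl (by omega) (by omega) ha (by omega) (by omega)
  have t1 : tau (b-1) a = a := by simp only [tau]; split_ifs <;> omega
  have t2 : tau (b-1) (b-1) = b := by simp only [tau]; split_ifs <;> omega
  rw [t1, t2, tie_lt n (by omega)] at h0
  have h2 := congrArg (· * TPM.sInv n (b-1)) h0
  simp only [mul_assoc, s_mul_sInv, mul_one] at h2
  simp only [← mul_assoc] at h2
  exact h2.symm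

/-- Crossing gap-2 ties commute. -/
private lemma crossing {a : ℕ} (h1 : 1 ≤ a) (h2 : a + 3 ≤ n) :
    TPM.genTie n (a+1) (a+3) * TPM.genTie n a (a+2)
      = TPM.genTie n a (a+2) * TPM.genTie n (a+1) (a+3) := by
  have e3 : a + 1 + 2 = a + 3 := rfl
  have e2 : a + 1 + 1 = a + 2 := rfl
  have hva : 1 ≤ a ∧ a + 1 ≤ n - 1 := ⟨h1, by omega⟩
  have hva1 : 1 ≤ a + 1 ∧ a + 1 + 1 ≤ n - 1 := ⟨by omega, by omega⟩
  have hX : TPM.genTie n (a+1) (a+3)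
      = TPM.s n (a+1) * TPM.e n (a+2) * TPM.sInv n (a+1) := by
    rw [← e3, genTie_two, e2]
  have hY : TPM.genTie n a (a+2)
      = TPM.sInv n (a+1) * TPM.e n a * TPM.s n (a+1) :=
    (genTie_two n a).trans (F1 n hva)
  have hsq : (TPM.s n (a+1) * TPM.s n (a+1)) * TPM.e n (a+2)
      = TPM.e n (a+2) * (TPM.s n (a+1) * TPM.s n (a+1)) := by
    have h3 := Fsq1 n hva1
    rw [e2] at h3
    simp only [mul_assoc] at h3 ⊢; exact h3
  have hsqa : (TPM.s n (a+1) * TPM.s n (a+1)) * TPM.e n a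
      = TPM.e n a * (TPM.s n (a+1) * TPM.s n (a+1)) := by
    have h3 := Fsq2 n hva
    simp only [mul_assoc] at h3 ⊢; exact h3
  have hsqinv : (TPM.sInv n (a+1) * TPM.sInv n (a+1)) * TPM.e n a
      = TPM.e n a * (TPM.sInv n (a+1) * TPM.sInv n (a+1)) := by
    have h3 := FsqInv2 n hva
    simp only [mul_assoc] at h3 ⊢; exact h3
  have hsqprod : (TPM.s n (a+1) * TPM.s n (a+1)) * (TPM.e n a * TPM.e n (a+2))
      = (TPM.e n a * TPM.e n (a+2)) * (TPM.s n (a+1) * TPM.s n (a+1)) := by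
    calc (TPM.s n (a+1) * TPM.s n (a+1)) * (TPM.e n a * TPM.e n (a+2))
        = TPM.e n a * ((TPM.s n (a+1) * TPM.s n (a+1)) * TPM.e n (a+2)) :=
          shift_assoc n hsqa _
      _ = TPM.e n a * (TPM.e n (a+2) * (TPM.s n (a+1) * TPM.s n (a+1))) := by rw [hsq]
      _ = (TPM.e n a * TPM.e n (a+2)) * (TPM.s n (a+1) * TPM.s n (a+1)) := by
          simp only [mul_assoc]
  have hL : (TPM.s n (a+1) * TPM.e n (a+2) * TPM.sInv n (a+1))
        * (TPM.sInv n (a+1) * TPM.e n a * TPM.s n (a+1))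
      = TPM.sInv n (a+1) * (TPM.e n a * (TPM.e n (a+2) * TPM.s n (a+1))) := by
    calc (TPM.s n (a+1) * TPM.e n (a+2) * TPM.sInv n (a+1))
          * (TPM.sInv n (a+1) * TPM.e n a * TPM.s n (a+1))
        = TPM.s n (a+1) * (TPM.e n (a+2) * ((TPM.sInv n (a+1) * TPM.sInv n (a+1))
            * (TPM.e n a * TPM.s n (a+1)))) := by simp only [mul_assoc]
      _ = TPM.s n (a+1) * (TPM.e n (a+2) * (TPM.e n a * ((TPM.sInv n (a+1)
            * TPM.sInv n (a+1)) * TPM.s n (a+1)))) := by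
          rw [shift_assoc n hsqinv (TPM.s n (a+1))]
      _ = TPM.s n (a+1) * (TPM.e n (a+2) * (TPM.e n a * TPM.sInv n (a+1))) := by
          rw [mul_assoc (TPM.sInv n (a+1)) (TPM.sInv n (a+1)) (TPM.s n (a+1)), sInv_mul_s,
            mul_one]
      _ = TPM.s n (a+1) * ((TPM.e n a * TPM.e n (a+2)) * TPM.sInv n (a+1)) := by
          rw [← mul_assoc (TPM.e n (a+2)) (TPM.e n a) (TPM.sInv n (a+1)),
            e_comm n (a+2) a]
      _ = TPM.sInv n (a+1) * ((TPM.e n a * TPM.e n (a+2)) * TPM.s n (a+1)) := by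
          refine cancel_s_left n (i := a+1) ?_
          calc TPM.s n (a+1) * (TPM.s n (a+1) * ((TPM.e n a * TPM.e n (a+2))
                * TPM.sInv n (a+1)))
              = ((TPM.s n (a+1) * TPM.s n (a+1)) * (TPM.e n a * TPM.e n (a+2)))
                  * TPM.sInv n (a+1) := by simp only [mul_assoc]
            _ = ((TPM.e n a * TPM.e n (a+2)) * (TPM.s n (a+1) * TPM.s n (a+1)))
                  * TPM.sInv n (a+1) := by rw [hsqprod]
            _ = (TPM.e n a * TPM.e n (a+2)) * TPM.s n (a+1) := by
                simp only [mul_assoc, s_mul_sInv, mul_one]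
            _ = TPM.s n (a+1) * (TPM.sInv n (a+1) * ((TPM.e n a * TPM.e n (a+2))
                  * TPM.s n (a+1))) := by rw [s_sInv_cancel]
      _ = TPM.sInv n (a+1) * (TPM.e n a * (TPM.e n (a+2) * TPM.s n (a+1))) := by
          simp only [mul_assoc]
  have hR : (TPM.sInv n (a+1) * TPM.e n a * TPM.s n (a+1))
        * (TPM.s n (a+1) * TPM.e n (a+2) * TPM.sInv n (a+1))
      = TPM.sInv n (a+1) * (TPM.e n a * (TPM.e n (a+2) * TPM.s n (a+1))) := by
    calc (TPM.sInv n (a+1) * TPM.e n a * TPM.s n (a+1))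
          * (TPM.s n (a+1) * TPM.e n (a+2) * TPM.sInv n (a+1))
        = TPM.sInv n (a+1) * (TPM.e n a * ((TPM.s n (a+1) * TPM.s n (a+1))
            * (TPM.e n (a+2) * TPM.sInv n (a+1)))) := by simp only [mul_assoc]
      _ = TPM.sInv n (a+1) * (TPM.e n a * (TPM.e n (a+2) * ((TPM.s n (a+1)
            * TPM.s n (a+1)) * TPM.sInv n (a+1)))) := by
          rw [shift_assoc n hsq (TPM.sInv n (a+1))]
      _ = TPM.sInv n (a+1) * (TPM.e n a * (TPM.e n (a+2) * TPM.s n (a+1))) := by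
          rw [mul_assoc (TPM.s n (a+1)) (TPM.s n (a+1)) (TPM.sInv n (a+1)), s_mul_sInv,
            mul_one]
  rw [hX, hY, hL, hR]

end TPMAux4
section TPMAux5

variable (n : ℕ)

/-- Single η's commute with all generalized ties. -/
private lemma Hlem : ∀ g m a b, b - a = g → 1 ≤ m → m ≤ n - 1 → 1 ≤ a → a < b → b ≤ n →
    TPM.e n m * TPM.genTie n a b = TPM.genTie n a b * TPM.e n m := by
  intro g
  induction g using Nat.strong_induction_on with
  | _ g IH =>
  intro m a b hg hm1 hm2 ha hab hb
  by_cases hbase : b = a + 1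
  · subst hbase; rw [genTie_base]; exact e_comm n m a
  · have hab2 : a + 2 ≤ b := by omega
    by_cases hcaseA : m + 1 ≠ a ∧ m ≠ a + 1
    · -- left recursion
      have hcomm : TPM.e n m * TPM.s n a = TPM.s n a * TPM.e n m := by
        by_cases hma : m = a
        · subst hma; exact e_s_same n m
        · exact e_s_far n (by omega)
      have hcommInv : TPM.e n m * TPM.sInv n a = TPM.sInv n a * TPM.e n m :=
        (comm_sInv n hcomm.symm).symm
      have hIH := IH (b - (a+1)) (by omega) m (a+1) b rfl hm1 hm2 (by omega) (by omega) hb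
      calc TPM.e n m * TPM.genTie n a b
          = TPM.e n m * (TPM.s n a * (TPM.genTie n (a+1) b * TPM.sInv n a)) := by
            rw [genTie_succ n (show a + 1 < b by omega)]; simp only [mul_assoc]
        _ = TPM.s n a * (TPM.e n m * (TPM.genTie n (a+1) b * TPM.sInv n a)) := by
            rw [shift_assoc n hcomm]
        _ = TPM.s n a * (TPM.genTie n (a+1) b * (TPM.e n m * TPM.sInv n a)) := by
            rw [shift_assoc n hIH]
        _ = TPM.s n a * (TPM.genTie n (a+1) b * (TPM.sInv n a * TPM.e n m)) := by
            rw [hcommInv]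
        _ = TPM.genTie n a b * TPM.e n m := by
            rw [genTie_succ n (show a + 1 < b by omega)]; simp only [mul_assoc]
    · by_cases hcaseB : m ≠ b - 2 ∧ m ≠ b
      · -- top recursion
        have hcomm : TPM.e n m * TPM.s n (b-1) = TPM.s n (b-1) * TPM.e n m := by
          by_cases hmb : m = b - 1
          · subst hmb; exact e_s_same n (b-1)
          · exact e_s_far n (by omega)
        have hcommInv : TPM.e n m * TPM.sInv n (b-1) = TPM.sInv n (b-1) * TPM.e n m :=
          (comm_sInv n hcomm.symm).symm
        have hIH := IH (b - 1 - a) (by omega) m a (b-1) rfl hm1 hm2 ha (by omega) (by omega)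
        calc TPM.e n m * TPM.genTie n a b
            = TPM.e n m * (TPM.s n (b-1) * (TPM.genTie n a (b-1) * TPM.sInv n (b-1))) := by
              rw [genTie_top n ha (show a + 1 < b by omega) hb]; simp only [mul_assoc]
          _ = TPM.s n (b-1) * (TPM.e n m * (TPM.genTie n a (b-1) * TPM.sInv n (b-1))) := by
              rw [shift_assoc n hcomm]
          _ = TPM.s n (b-1) * (TPM.genTie n a (b-1) * (TPM.e n m * TPM.sInv n (b-1))) := by
              rw [shift_assoc n hIH]
          _ = TPM.s n (b-1) * (TPM.genTie n a (b-1) * (TPM.sInv n (b-1) * TPM.e n m)) := by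
              rw [hcommInv]
          _ = TPM.genTie n a b * TPM.e n m := by
              rw [genTie_top n ha (show a + 1 < b by omega) hb]; simp only [mul_assoc]
      · -- hard case : m = a + 1 and b = a + 3
        have hm' : m = a + 1 := by omega
        have hb' : b = a + 3 := by omega
        subst hm' hb'
        have ex : a + 3 - 1 = a + 2 := rfl
        have e2 : a + 1 + 1 = a + 2 := rfl
        have htop3 : TPM.genTie n a (a+3)
            = TPM.s n (a+2) * TPM.genTie n a (a+2) * TPM.sInv n (a+2) := by
          have h0 := genTie_top n ha (show a + 1 < a + 3 by omega) hb
          rw [ex] at h0; exact h0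
        have ht3 : TPM.s n (a+2) * TPM.genTie n a (a+2)
            = TPM.genTie n a (a+3) * TPM.s n (a+2) := by
          have h0 := L1core n 2 (a+2) a (a+2) (by omega) (by omega) (by omega) ha
            (by omega) (by omega)
          have t1 : tau (a+2) a = a := by simp only [tau]; split_ifs <;> omega
          have t2 : tau (a+2) (a+2) = a + 3 := by simp only [tau]; split_ifs <;> omega
          rw [t1, t2, tie_lt n (by omega)] at h0; exact h0
        have ht2 : TPM.s n (a+2) * TPM.genTie n (a+1) (a+3)
            = TPM.e n (a+1) * TPM.s n (a+2) := by
          have h0 := L1core n 2 (a+2) (a+1) (a+3) (by omega) (by omega) (by omega)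
            (by omega) (by omega) hb
          have t1 : tau (a+2) (a+1) = a + 1 := by simp only [tau]; split_ifs <;> omega
          have t2 : tau (a+2) (a+3) = a + 2 := by simp only [tau]; split_ifs <;> omega
          have t3 : tie n (a+1) (a+2) = TPM.e n (a+1) := by
            rw [tie_lt n (by omega), ← e2, genTie_base]
          rw [t1, t2, t3] at h0; exact h0
        calc TPM.e n (a+1) * TPM.genTie n a (a+3)
            = TPM.e n (a+1) * (TPM.s n (a+2) * (TPM.genTie n a (a+2) * TPM.sInv n (a+2))) := by
              rw [htop3]; simp only [mul_assoc]
          _ = TPM.s n (a+2) * (TPM.genTie n (a+1) (a+3)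
                * (TPM.genTie n a (a+2) * TPM.sInv n (a+2))) := by
              rw [shift_assoc' n ht2.symm]
          _ = TPM.s n (a+2) * ((TPM.genTie n (a+1) (a+3) * TPM.genTie n a (a+2))
                * TPM.sInv n (a+2)) := by simp only [mul_assoc]
          _ = TPM.s n (a+2) * ((TPM.genTie n a (a+2) * TPM.genTie n (a+1) (a+3))
                * TPM.sInv n (a+2)) := by rw [crossing n ha hb]
          _ = (TPM.s n (a+2) * TPM.genTie n a (a+2)) * (TPM.genTie n (a+1) (a+3)
                * TPM.sInv n (a+2)) := by simp only [mul_assoc]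
          _ = (TPM.genTie n a (a+3) * TPM.s n (a+2)) * (TPM.genTie n (a+1) (a+3)
                * TPM.sInv n (a+2)) := by rw [ht3]
          _ = TPM.genTie n a (a+3) * ((TPM.s n (a+2) * TPM.genTie n (a+1) (a+3))
                * TPM.sInv n (a+2)) := by simp only [mul_assoc]
          _ = TPM.genTie n a (a+3) * ((TPM.e n (a+1) * TPM.s n (a+2)) * TPM.sInv n (a+2)) := by
              rw [ht2]
          _ = TPM.genTie n a (a+3) * TPM.e n (a+1) := by
              simp only [mul_assoc, s_mul_sInv, mul_one]

/-- Generalized ties pairwise commute. -/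
private lemma Glem : ∀ g a b, b - a = g → 1 ≤ a → a < b → b ≤ n →
    ∀ c d, 1 ≤ c → 1 ≤ d → c ≤ n → d ≤ n → c ≠ d →
    TPM.genTie n a b * tie n c d = tie n c d * TPM.genTie n a b := by
  intro g
  induction g using Nat.strong_induction_on with
  | _ g IH =>
  intro a b hg ha hab hb c d hc1 hd1 hcn hdn hcd
  by_cases hbase : b = a + 1
  · subst hbase; rw [genTie_base]
    rcases lt_or_gt_of_ne hcd with h | h
    · rw [tie_lt n h]; exact Hlem n (d - c) a c d rfl ha (by omega) hc1 h hdn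
    · rw [tie_comm n c d, tie_lt n h]
      exact Hlem n (c - d) a d c rfl ha (by omega) hd1 h hcn
  · have hk2 : a ≤ n - 1 := by omega
    have h1 : TPM.sInv n a * tie n c d = tie n (tau a c) (tau a d) * TPM.sInv n a :=
      L1invT n ha hk2 hc1 hd1 hcn hdn hcd
    have h2 := IH (b - (a+1)) (by omega) (a+1) b rfl (by omega) (by omega) hb
      (tau a c) (tau a d) (tau_ge_one ha hc1) (tau_ge_one ha hd1)
      (tau_le_n n ha hk2 hcn) (tau_le_n n ha hk2 hdn) (tau_ne hcd)
    have h3 : TPM.s n a * tie n (tau a c) (tau a d) = tie n c d * TPM.s n a := by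
      have h0 := L1T n ha hk2 (tau_ge_one ha hc1) (tau_ge_one ha hd1)
        (tau_le_n n ha hk2 hcn) (tau_le_n n ha hk2 hdn) (tau_ne hcd)
      rwa [tau_tau, tau_tau] at h0
    calc TPM.genTie n a b * tie n c d
        = TPM.s n a * (TPM.genTie n (a+1) b * (TPM.sInv n a * tie n c d)) := by
          rw [genTie_succ n (show a + 1 < b by omega)]; simp only [mul_assoc]
      _ = TPM.s n a * (TPM.genTie n (a+1) b * (tie n (tau a c) (tau a d)
            * TPM.sInv n a)) := by rw [h1]
      _ = TPM.s n a * ((TPM.genTie n (a+1) b * tie n (tau a c) (tau a d))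
            * TPM.sInv n a) := by simp only [mul_assoc]
      _ = TPM.s n a * ((tie n (tau a c) (tau a d) * TPM.genTie n (a+1) b)
            * TPM.sInv n a) := by rw [h2]
      _ = (TPM.s n a * tie n (tau a c) (tau a d)) * (TPM.genTie n (a+1) b
            * TPM.sInv n a) := by simp only [mul_assoc]
      _ = (tie n c d * TPM.s n a) * (TPM.genTie n (a+1) b * TPM.sInv n a) := by rw [h3]
      _ = tie n c d * TPM.genTie n a b := by
          rw [genTie_succ n (show a + 1 < b by omega)]; simp only [mul_assoc]

private lemma revprod : ∀ (L : List ℕ),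
    ((L.reverse.map (TPM.sInv n)).prod) * ((L.map (TPM.s n)).prod) = 1 := by
  intro L
  induction L with
  | nil => simp
  | cons x t ih =>
    simp only [List.reverse_cons, List.map_append, List.prod_append, List.map_cons,
      List.prod_cons, List.map_nil, List.prod_nil, mul_one, mul_assoc, sInv_s_cancel]
    simpa only [mul_assoc] using ih

/-- Generalized ties are idempotent. -/
private lemma genTie_idem (a b : ℕ) :
    TPM.genTie n a b * TPM.genTie n a b = TPM.genTie n a b := by
  show (_ * TPM.e n (b-1) * _) * (_ * TPM.e n (b-1) * _) = _
  set P := ((List.range' a (b - 1 - a)).map (TPM.s n)).prod with hP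
  set Q := ((List.range' a (b - 1 - a)).reverse.map (TPM.sInv n)).prod with hQ
  have hQP : Q * P = 1 := revprod n _
  calc P * TPM.e n (b-1) * Q * (P * TPM.e n (b-1) * Q)
      = P * (TPM.e n (b-1) * ((Q * P) * (TPM.e n (b-1) * Q))) := by simp only [mul_assoc]
    _ = P * (TPM.e n (b-1) * (TPM.e n (b-1) * Q)) := by rw [hQP, one_mul]
    _ = P * ((TPM.e n (b-1) * TPM.e n (b-1)) * Q) := by simp only [mul_assoc]
    _ = P * (TPM.e n (b-1) * Q) := by rw [e_idem]
    _ = P * TPM.e n (b-1) * Q := by simp only [mul_assoc]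

end TPMAux5

/-- **Generalized ties in `TPM n` are idempotent and pairwise commute**: for every n ≥ 2
and all indices 1 ≤ i < j ≤ n and 1 ≤ k < l ≤ n, η_{i,j} η_{i,j} = η_{i,j} and
η_{i,j} η_{k,l} = η_{k,l} η_{i,j} hold in the tied pseudo braid monoid `TPM n`. -/
theorem tpm_genTie_idem_comm (n : ℕ) (hn : 2 ≤ n) (i j k l : ℕ)
    (hi : 1 ≤ i) (hij : i < j) (hj : j ≤ n)
    (hk : 1 ≤ k) (hkl : k < l) (hl : l ≤ n) :
    TPM.genTie n i j * TPM.genTie n i j = TPM.genTie n i j ∧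
    TPM.genTie n i j * TPM.genTie n k l = TPM.genTie n k l * TPM.genTie n i j := by
  refine ⟨genTie_idem n i j, ?_⟩
  have h := Glem n (j - i) i j rfl hi hij hj k l hk (by omega) (by omega) hl (by omega)
  rwa [tie_lt n hkl] at h
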